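/- arXiv:1511.06031 — 5 statements merged into one kernel-verified Lean document; each statement's English description precedes it below -/
import Mathlib

section
/- Let m > 4 be an integer such that there exists an integer n with m dividing n² + 1. Then 4 divides the Euler totient φ(m). -/
theorem stmt_6 (m : ℕ) (hm : 4 < m) (h : ∃ n : ℤ, (m : ℤ) ∣ n ^ 2 + 1) :
    4 ∣ Nat.totient m := by
  obtain ⟨n, hn⟩ := h
  haveI : NeZero m := ⟨by omega⟩
  haveI : Fact (2 < m) := ⟨by omega⟩
  have ha : (n : ZMod m) ^ 2 = -1 := by
    have h0 : ((n ^ 2 + 1 : ℤ) : ZMod m) = 0 := by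
      exact_mod_cast (ZMod.intCast_zmod_eq_zero_iff_dvd _ _).mpr hn
    push_cast at h0
    linear_combination h0
  set a : ZMod m := (n : ZMod m) with ha'
  have hul : a * (-a) = 1 := by rw [mul_neg, ← sq, ha]; ring
  have hur : (-a) * a = 1 := by rw [neg_mul, ← sq, ha]; ring
  let u : (ZMod m)ˣ := ⟨a, -a, hul, hur⟩
  have hu2 : u ^ 2 = -1 := by
    ext
    show (u : ZMod m) ^ 2 = ((-1 : (ZMod m)ˣ) : ZMod m)
    simpa using ha
  have hne : u ^ 2 ≠ 1 := by
    rw [hu2]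
    intro hc
    have : (-1 : ZMod m) = 1 := by
      have := congrArg (Units.val) hc
      simpa using this
    exact ZMod.neg_one_ne_one this
  have h4 : orderOf u = 4 := by
    have : orderOf u = 2 ^ 2 := by
      apply orderOf_eq_prime_pow
      · simpa using hne
      · show u ^ (2 ^ 2) = 1
        rw [show (2 : ℕ) ^ 2 = 2 * 2 from rfl, pow_mul, hu2]
        simp
    simpa using this
  have hd : orderOf u ∣ Fintype.card (ZMod m)ˣ := orderOf_dvd_card
  rwa [h4, ZMod.card_units_eq_totient] at hd
end

section
/- Let m > 4 be an integer such that there exists an integer n with m dividing n² + n + 1. Then 6 divides the Euler totient φ(m). -/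
theorem stmt_7 (m : ℕ) (hm : 4 < m) (h : ∃ n : ℤ, (m : ℤ) ∣ n ^ 2 + n + 1) :
    6 ∣ Nat.totient m := by
  obtain ⟨n, hn⟩ := h
  haveI : NeZero m := ⟨by omega⟩
  set u : ZMod m := (n : ZMod m) with hu_def
  have hu : u ^ 2 + u + 1 = 0 := by
    have := (ZMod.intCast_zmod_eq_zero_iff_dvd (n ^ 2 + n + 1) m).2 hn
    push_cast at this
    exact this
  have hu3 : u ^ 3 = 1 := by linear_combination (u - 1) * hu
  have hne : u ≠ 1 := by
    intro h1
    rw [h1] at hu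
    have h3 : ((3 : ℕ) : ZMod m) = 0 := by push_cast; linear_combination hu
    have := (ZMod.natCast_eq_zero_iff 3 m).1 h3
    have := Nat.le_of_dvd (by norm_num) this
    omega
  set w : (ZMod m)ˣ := ⟨u, u ^ 2, by linear_combination hu3, by linear_combination hu3⟩
    with hw_def
  have hw3 : w ^ 3 = 1 := by
    ext
    push_cast
    exact hu3
  have hwne : w ≠ 1 := by
    intro h1
    exact hne (congrArg Units.val h1)
  haveI : Fact (Nat.Prime 3) := ⟨by norm_num⟩
  have hord : orderOf w = 3 := orderOf_eq_prime hw3 hwne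
  have h3dvd : 3 ∣ Nat.totient m := by
    have := orderOf_dvd_card (x := w)
    rwa [hord, ZMod.card_units_eq_totient m] at this
  have h2dvd : 2 ∣ Nat.totient m := (Nat.totient_even (by omega)).two_dvd
  exact (Nat.coprime_two_left.mpr (by decide)).mul_dvd_of_dvd_of_dvd h2dvd h3dvd
end

section
/- Let m > 2 be an integer, and let m | n² + 1 hold for integers n, with a = (x + y·i)/m an element of ℂ (x, y ∈ ℤ) such that x ≡ n·y (mod m) and gcd(y, m) = 1. Then the additive subgroup of ℂ generated by a, 1, and i equals the additive subgroup generated by (n + i)/m, 1, and i. -/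
open Complex

theorem stmt_11 (m n x y : ℤ) (hm : 2 < m) (h : m ∣ n ^ 2 + 1)
    (hxy : m ∣ x - n * y) (hgcd : Int.gcd y m = 1) (a : ℂ)
    (ha : a = ((x : ℂ) + (y : ℂ) * I) / (m : ℂ)) :
    AddSubgroup.closure ({a, 1, I} : Set ℂ) =
      AddSubgroup.closure ({((n : ℂ) + I) / (m : ℂ), 1, I} : Set ℂ) := by
  have hm0 : (m : ℂ) ≠ 0 := by
    have : m ≠ 0 := by omega
    exact_mod_cast this
  obtain ⟨k, hk⟩ := hxy
  set u := Int.gcdA y m with hu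
  set v := Int.gcdB y m with hv
  have huv : y * u + m * v = 1 := by
    have h2 := Int.gcd_eq_gcd_ab y m
    rw [hgcd] at h2
    exact_mod_cast h2.symm
  have hx : x = n * y + m * k := by linarith
  have hx' : (x : ℂ) = (n : ℂ) * y + m * k := by exact_mod_cast hx
  have huv' : (y : ℂ) * u + (m : ℂ) * v = 1 := by exact_mod_cast huv
  have key1 : a = y • (((n : ℂ) + I) / (m : ℂ)) + k • (1 : ℂ) := by
    rw [ha]
    field_simp
    push_cast
    linear_combination hx' - ((y : ℂ) * I + (y : ℂ) * n) * (mul_inv_cancel₀ hm0)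
  have key2 : ((n : ℂ) + I) / (m : ℂ) = u • a + (-(u * k - n * v)) • (1 : ℂ) + v • I := by
    rw [ha]
    field_simp
    push_cast
    linear_combination -(u : ℂ) * hx' - ((n : ℂ) + I) * huv' - (I * (u : ℂ) * y + (u : ℂ) * x) * (mul_inv_cancel₀ hm0)
  apply le_antisymm
  · rw [AddSubgroup.closure_le]
    intro z hz
    simp only [Set.mem_insert_iff, Set.mem_singleton_iff] at hz
    have h1 : (1 : ℂ) ∈ AddSubgroup.closure ({((n : ℂ) + I) / (m : ℂ), 1, I} : Set ℂ) :=
      AddSubgroup.subset_closure (by simp)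
    have hI : I ∈ AddSubgroup.closure ({((n : ℂ) + I) / (m : ℂ), 1, I} : Set ℂ) :=
      AddSubgroup.subset_closure (by simp)
    have hb : ((n : ℂ) + I) / (m : ℂ) ∈
        AddSubgroup.closure ({((n : ℂ) + I) / (m : ℂ), 1, I} : Set ℂ) :=
      AddSubgroup.subset_closure (by simp)
    rcases hz with rfl | rfl | rfl
    · rw [key1]
      exact add_mem (zsmul_mem hb y) (zsmul_mem h1 k)
    · exact h1
    · exact hI
  · rw [AddSubgroup.closure_le]
    intro z hz
    simp only [Set.mem_insert_iff, Set.mem_singleton_iff] at hz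
    have h1 : (1 : ℂ) ∈ AddSubgroup.closure ({a, 1, I} : Set ℂ) :=
      AddSubgroup.subset_closure (by simp)
    have hI : I ∈ AddSubgroup.closure ({a, 1, I} : Set ℂ) :=
      AddSubgroup.subset_closure (by simp)
    have haa : a ∈ AddSubgroup.closure ({a, 1, I} : Set ℂ) :=
      AddSubgroup.subset_closure (by simp)
    rcases hz with rfl | rfl | rfl
    · rw [key2]
      exact add_mem (add_mem (zsmul_mem haa u) (zsmul_mem h1 _)) (zsmul_mem hI v)
    · exact h1
    · exact hI
end

section
/- In the elliptic curve ℂ/(ℤ + ℤ·i), suppose a is represented by (x + y·i)/m ∈ ℂ with integers x, y, m > 2, that a has order exactly m in ℂ/(ℤ + ℤ·i), and that i·a = n·a in ℂ/(ℤ + ℤ·i) for an integer n (i.e., i·(x + y·i)/m − n·(x + y·i)/m ∈ ℤ + ℤ·i). Then gcd(y, m) = 1 and m divides n² + 1. -/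
open Complex

private noncomputable def Slat : AddSubgroup ℂ where
  carrier := {z | ∃ p q : ℤ, z = (p : ℂ) + (q : ℂ) * I}
  zero_mem' := ⟨0, 0, by simp⟩
  add_mem' := by
    rintro a b ⟨p, q, rfl⟩ ⟨p', q', rfl⟩
    exact ⟨p + p', q + q', by push_cast; ring⟩
  neg_mem' := by
    rintro a ⟨p, q, rfl⟩
    exact ⟨-p, -q, by push_cast; ring⟩

private lemma mem_L_iff (z : ℂ) :
    z ∈ AddSubgroup.closure ({1, I} : Set ℂ) ↔ ∃ p q : ℤ, z = (p : ℂ) + (q : ℂ) * I := by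
  constructor
  · intro h
    refine (AddSubgroup.closure_le Slat).mpr ?_ h
    rintro w (rfl | rfl)
    · exact ⟨1, 0, by simp⟩
    · exact ⟨0, 1, by simp⟩
  · rintro ⟨p, q, rfl⟩
    have h1 : (1 : ℂ) ∈ AddSubgroup.closure ({1, I} : Set ℂ) :=
      AddSubgroup.subset_closure (by simp)
    have h2 : I ∈ AddSubgroup.closure ({1, I} : Set ℂ) :=
      AddSubgroup.subset_closure (by simp)
    have := AddSubgroup.add_mem _ (AddSubgroup.zsmul_mem _ h1 p) (AddSubgroup.zsmul_mem _ h2 q)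
    simpa [zsmul_eq_mul] using this

private lemma extract (m A B p q : ℤ) (hm : (m : ℂ) ≠ 0)
    (h : ((A : ℂ) + (B : ℂ) * I) / (m : ℂ) = (p : ℂ) + (q : ℂ) * I) :
    m ∣ A ∧ m ∣ B := by
  rw [div_eq_iff hm] at h
  have hre := congrArg Complex.re h
  have him := congrArg Complex.im h
  simp [Complex.add_re, Complex.add_im, Complex.mul_re, Complex.mul_im] at hre him
  have hre' : A = p * m := by exact_mod_cast hre
  have him' : B = q * m := by exact_mod_cast him
  exact ⟨⟨p, hre'.trans (mul_comm p m)⟩, ⟨q, him'.trans (mul_comm q m)⟩⟩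

theorem stmt_15 (m x y n : ℤ) (hm : 2 < m) (a : ℂ)
    (ha : a = ((x : ℂ) + (y : ℂ) * I) / (m : ℂ))
    (L : AddSubgroup ℂ) (hL : L = AddSubgroup.closure ({1, I} : Set ℂ))
    (hord : m • a ∈ L ∧ ∀ k : ℤ, 0 < k → k < m → k • a ∉ L)
    (hia : I * a - (n : ℂ) * a ∈ L) :
    Int.gcd y m = 1 ∧ m ∣ n ^ 2 + 1 := by
  subst hL ha
  have hm0 : (0:ℤ) < m := by omega
  have hmC : (m : ℂ) ≠ 0 := by exact_mod_cast (by omega : m ≠ 0)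
  rw [mem_L_iff] at hia
  obtain ⟨p, q, hpq⟩ := hia
  have hEq : (((-y - n*x : ℤ) : ℂ) + ((x - n*y : ℤ) : ℂ) * I) / (m : ℂ)
      = (p : ℂ) + (q : ℂ) * I := by
    rw [← hpq]
    field_simp
    ring_nf
    rw [Complex.I_sq]
    push_cast; ring
  obtain ⟨hd1, hd2⟩ := extract m _ _ p q hmC hEq
  -- hd1 : m ∣ -y - n*x, hd2 : m ∣ x - n*y
  have hgcd : Int.gcd y m = 1 := by
    by_contra hne
    set d := Int.gcd y m with hdd
    have hd0 : (d:ℤ) ∣ y := Int.gcd_dvd_left y m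
    have hdm : (d:ℤ) ∣ m := Int.gcd_dvd_right y m
    have hdne : d ≠ 0 := by
      intro h0
      rw [h0] at hdm
      simp at hdm
      omega
    have hdpos : 1 < (d:ℤ) := by
      have : 1 < d := by omega
      exact_mod_cast this
    have hdx : (d:ℤ) ∣ x := by
      have h3 : (d:ℤ) ∣ (x - n*y) + n*y := (dvd_trans hdm hd2).add (hd0.mul_left n)
      simpa using h3
    obtain ⟨k, hk⟩ := hdm
    obtain ⟨x', hx⟩ := hdx
    obtain ⟨y', hy⟩ := hd0
    have hk0 : 0 < k := by nlinarith
    have hklt : k < m := by nlinarith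
    refine hord.2 k hk0 hklt ?_
    rw [mem_L_iff]
    refine ⟨x', y', ?_⟩
    rw [zsmul_eq_mul]
    field_simp
    push_cast [hx, hy, hk]
    ring
  refine ⟨hgcd, ?_⟩
  have h1 : m ∣ -(-y - n*x) - n*(x - n*y) := (dvd_neg.mpr hd1).sub (hd2.mul_left n)
  have h2 : -(-y - n*x) - n*(x - n*y) = y * (n^2+1) := by ring
  rw [h2] at h1
  have hco : IsCoprime (m : ℤ) y := by
    rw [Int.isCoprime_iff_gcd_eq_one, Int.gcd_comm]
    exact hgcd
  exact hco.dvd_of_dvd_mul_left h1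
end

section
/- In the elliptic curve ℂ/(ℤ + ℤ·ω) with ω² + ω + 1 = 0, suppose a is represented by (x + y·ω)/m ∈ ℂ with integers x, y, m > 3, that a has order exactly m, and that ω·a = n·a in ℂ/(ℤ + ℤ·ω) for an integer n. Then gcd(y, m) = 1 and m divides n² + n + 1. -/
open Complex

theorem stmt_16 (ω : ℂ) (hω : ω = (-1 + Real.sqrt 3 * I) / 2)
    (m x y n : ℤ) (hm : 3 < m) (a : ℂ)
    (ha : a = ((x : ℂ) + (y : ℂ) * ω) / (m : ℂ))
    (L : AddSubgroup ℂ) (hL : L = AddSubgroup.closure ({1, ω} : Set ℂ))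
    (hord : m • a ∈ L ∧ ∀ k : ℤ, 0 < k → k < m → k • a ∉ L)
    (hωa : ω * a - (n : ℂ) * a ∈ L) :
    Int.gcd y m = 1 ∧ m ∣ n ^ 2 + n + 1 := by
  have hm0 : (m : ℂ) ≠ 0 := by
    exact_mod_cast (by omega : m ≠ 0)
  have h3 : (Real.sqrt 3 : ℂ)^2 = 3 := by
    norm_cast; rw [Real.sq_sqrt]; norm_num
  have hω2 : ω^2 = -1 - ω := by
    rw [hω]; linear_combination (Complex.I^2 * h3 + 3 * Complex.I_sq)/4
  -- membership characterization
  have hmem : ∀ z : ℂ, z ∈ L ↔ ∃ p q : ℤ, z = p + q * ω := by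
    intro z
    rw [hL]
    constructor
    · intro hz
      induction hz using AddSubgroup.closure_induction with
      | mem w hw =>
        rcases hw with h | h
        · exact ⟨1, 0, by rw [h]; push_cast; ring⟩
        · exact ⟨0, 1, by rw [h]; push_cast; ring⟩
      | zero => exact ⟨0, 0, by push_cast; ring⟩
      | add a b _ _ ha hb =>
        obtain ⟨p, q, rfl⟩ := ha
        obtain ⟨p', q', rfl⟩ := hb
        exact ⟨p + p', q + q', by push_cast; ring⟩
      | neg a _ ha =>
        obtain ⟨p, q, rfl⟩ := ha
        exact ⟨-p, -q, by push_cast; ring⟩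
    · rintro ⟨p, q, rfl⟩
      have h1 : (1:ℂ) ∈ AddSubgroup.closure ({1, ω} : Set ℂ) :=
        AddSubgroup.subset_closure (by simp)
      have h2 : ω ∈ AddSubgroup.closure ({1, ω} : Set ℂ) :=
        AddSubgroup.subset_closure (by simp)
      have := AddSubgroup.add_mem _ (AddSubgroup.zsmul_mem _ h1 p)
        (AddSubgroup.zsmul_mem _ h2 q)
      simpa [zsmul_eq_mul] using this
  -- injectivity
  have hinj : ∀ p q p' q' : ℤ, (p:ℂ) + q*ω = p' + q'*ω → p = p' ∧ q = q' := by
    intro p q p' q' h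
    rw [hω, Complex.ext_iff] at h
    obtain ⟨hre, him⟩ := h
    simp at him hre
    refine ⟨?_, him⟩
    rw [him] at hre
    have : (p:ℝ) = p' := by linarith
    exact_mod_cast this
  -- extract integer congruences from hωa
  obtain ⟨p, q, hpq⟩ := (hmem _).mp hωa
  have key : ((-y - n*x : ℤ):ℂ) + ((x - y - n*y : ℤ):ℂ) * ω
      = ((m*p : ℤ):ℂ) + ((m*q : ℤ):ℂ) * ω := by
    push_cast
    have := hpq
    rw [ha] at this
    field_simp at this
    linear_combination this - (y:ℂ) * hω2
  obtain ⟨e1, e2⟩ := hinj _ _ _ _ key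
  -- gcd(x, y, m) = 1 from the order condition
  set G : ℕ := Int.gcd (Int.gcd x y) m with hG
  have hGd : (G:ℤ) ∣ m := Int.gcd_dvd_right _ _
  have hGx : (G:ℤ) ∣ x := dvd_trans (Int.gcd_dvd_left _ _) (Int.gcd_dvd_left _ _)
  have hGy : (G:ℤ) ∣ y := dvd_trans (Int.gcd_dvd_left _ _) (Int.gcd_dvd_right _ _)
  have hG1 : G = 1 := by
    by_contra hne
    obtain ⟨m', hm'⟩ := hGd
    obtain ⟨x', hx'⟩ := hGx
    obtain ⟨y', hy'⟩ := hGy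
    have h0 : G ≠ 0 := by
      rintro h
      rw [h] at hm'
      simp only [Nat.cast_zero, zero_mul] at hm'
      omega
    have hGpos : 1 < (G:ℤ) := by exact_mod_cast (by omega : 1 < G)
    have hm'pos : 0 < m' := by nlinarith
    have hm'lt : m' < m := by nlinarith
    refine hord.2 m' hm'pos hm'lt ?_
    rw [hmem]
    refine ⟨x', y', ?_⟩
    have hG0 : ((G:ℕ):ℂ) ≠ 0 := Nat.cast_ne_zero.mpr h0
    have hm'0 : ((m':ℤ):ℂ) ≠ 0 := by exact_mod_cast (by omega : (m':ℤ) ≠ 0)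
    rw [zsmul_eq_mul, ha, hx', hy', hm']
    push_cast
    rw [mul_comm, div_mul_eq_mul_div, div_eq_iff (mul_ne_zero hG0 hm'0)]
    ring
  -- first goal
  have hdx : ((Int.gcd y m : ℕ):ℤ) ∣ x := by
    have h1 : ((Int.gcd y m : ℕ):ℤ) ∣ y := Int.gcd_dvd_left _ _
    have h2 : ((Int.gcd y m : ℕ):ℤ) ∣ m := Int.gcd_dvd_right _ _
    have : x = m*q + y + n*y := by linarith
    rw [this]
    exact dvd_add (dvd_add (Dvd.dvd.mul_right h2 q) h1) (Dvd.dvd.mul_left h1 n)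
  have hgoal1 : Int.gcd y m = 1 := by
    have hd : ((Int.gcd y m : ℕ):ℤ) ∣ (G:ℤ) := by
      rw [hG]
      exact_mod_cast Int.dvd_gcd (by exact_mod_cast Int.dvd_gcd hdx (Int.gcd_dvd_left _ _)) (Int.gcd_dvd_right _ _)
    rw [hG1] at hd
    exact_mod_cast Int.eq_one_of_dvd_one (by positivity) hd
  refine ⟨hgoal1, ?_⟩
  -- second goal
  have hdvd : m ∣ (n^2 + n + 1) * y := by
    refine ⟨-(p + n*q), ?_⟩
    linear_combination (-n : ℤ)*e2 - e1
  have hcop : IsCoprime m y := Int.isCoprime_iff_gcd_eq_one.mpr (by rw [Int.gcd_comm]; exact hgoal1)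
  exact hcop.dvd_of_dvd_mul_right hdvd
end
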